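/- Let f : ℝ² → ℝ² be a C² vector field compactly supported in 𝔻. Then L₁f(x) = 0 for all x ∈ ℝ² if and only if there exists a C³ scalar function φ : ℝ² → ℝ supported in 𝔻 such that f = ∇φ. -/

import Mathlib

open MeasureTheory

noncomputable section

/-- Euclidean dot product on `ℝ × ℝ`. -/
def dot (a b : ℝ × ℝ) : ℝ := a.1 * b.1 + a.2 * b.2

/-- Rotation by `π/2`: `w⊥ = (−w₂, w₁)`. -/
def perp (w : ℝ × ℝ) : ℝ × ℝ := (-w.2, w.1)

/-- The open unit disc in `ℝ²`. -/
def disc : Set (ℝ × ℝ) := {p : ℝ × ℝ | p.1 ^ 2 + p.2 ^ 2 < 1}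

/-- Gradient of a scalar function on `ℝ²`. -/
def grad (φ : ℝ × ℝ → ℝ) (x : ℝ × ℝ) : ℝ × ℝ :=
  (fderiv ℝ φ x (1, 0), fderiv ℝ φ x (0, 1))

/-- Longitudinal V-line transform with weight `α = 1`. -/
def L1 (u v : ℝ × ℝ → ℝ × ℝ) (f : ℝ × ℝ → ℝ × ℝ) (x : ℝ × ℝ) : ℝ :=
  (- ∫ t in Set.Ioi (0 : ℝ), dot (u x) (f (x + t • u x))) +
    ∫ t in Set.Ioi (0 : ℝ), dot (v x) (f (x + t • v x))

def Rbd (x : ℝ × ℝ) : ℝ := 1 + 2 * (|x.1| + |x.2|)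

lemma Rbd_pos (x : ℝ × ℝ) : 0 < Rbd x := by
  have := abs_nonneg x.1; have := abs_nonneg x.2
  unfold Rbd; linarith

lemma dot_comm (a b : ℝ × ℝ) : dot a b = dot b a := by simp [dot]; ring

lemma unit_abs {a : ℝ × ℝ} (h : dot a a = 1) : |a.1| ≤ 1 ∧ |a.2| ≤ 1 := by
  simp only [dot] at h
  constructor <;> nlinarith [abs_nonneg a.1, abs_nonneg a.2, sq_abs a.1, sq_abs a.2,
    sq_nonneg a.1, sq_nonneg a.2, sq_nonneg (|a.1|-1), sq_nonneg (|a.2|-1),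
    sq_nonneg (|a.1|+1), sq_nonneg (|a.2|+1)]

lemma far_out {a : ℝ × ℝ} (ha : dot a a = 1) (x : ℝ × ℝ) {t : ℝ} (ht : Rbd x ≤ t) :
    (x + t • a) ∉ disc := by
  have h1 : |a.1| ≤ 1 := (unit_abs ha).1
  have h2 : |a.2| ≤ 1 := (unit_abs ha).2
  have e1 : -|x.1| ≤ x.1 * a.1 := by
    nlinarith [neg_abs_le (x.1 * a.1), abs_mul x.1 a.1, abs_nonneg x.1]
  have e2 : -|x.2| ≤ x.2 * a.2 := by
    nlinarith [neg_abs_le (x.2 * a.2), abs_mul x.2 a.2, abs_nonneg x.2]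
  have ht1 : 1 + 2 * (|x.1| + |x.2|) ≤ t := ht
  simp only [disc, Set.mem_setOf_eq, not_lt, Prod.fst_add, Prod.snd_add, Prod.smul_fst,
    Prod.smul_snd, smul_eq_mul]
  simp only [dot] at ha
  have ht0 : (0:ℝ) ≤ t := by linarith [abs_nonneg x.1, abs_nonneg x.2]
  have k1 : t * (-|x.1|) ≤ t * (x.1 * a.1) := mul_le_mul_of_nonneg_left e1 ht0
  have k2 : t * (-|x.2|) ≤ t * (x.2 * a.2) := mul_le_mul_of_nonneg_left e2 ht0
  have kt : t * (1 + 2 * (|x.1| + |x.2|)) ≤ t * t := mul_le_mul_of_nonneg_left ht1 ht0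
  nlinarith [sq_nonneg x.1, sq_nonneg x.2, abs_nonneg x.1, abs_nonneg x.2, sq_nonneg (x.1 + t*a.1), sq_nonneg (x.2+t*a.2)]

lemma integral_Ioi_eq_intervalIntegral {g : ℝ → ℝ} (hg : Continuous g) {B R : ℝ}
    (hB : 0 ≤ B) (hBR : B ≤ R) (hvan : ∀ t, B ≤ t → g t = 0) :
    ∫ t in Set.Ioi (0:ℝ), g t = ∫ t in (0:ℝ)..R, g t := by
  have h0R : (0:ℝ) ≤ R := hB.trans hBR
  have hzero : ∀ t ∈ Set.Ioi R, g t = 0 := fun t ht => hvan t (hBR.trans ht.le)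
  have hint1 : IntegrableOn g (Set.Ioc 0 R) := hg.integrableOn_Ioc
  have hint2 : IntegrableOn g (Set.Ioi R) := by
    rw [integrableOn_congr_fun hzero measurableSet_Ioi]
    exact integrableOn_zero
  have hdisj : Disjoint (Set.Ioc (0:ℝ) R) (Set.Ioi R) := by
    rw [Set.disjoint_left]
    rintro t ⟨_, h1⟩ h2
    exact absurd (Set.mem_Ioi.mp h2) (not_lt.mpr h1)
  rw [← Set.Ioc_union_Ioi_eq_Ioi h0R, setIntegral_union hdisj measurableSet_Ioi hint1 hint2,
    setIntegral_congr_fun measurableSet_Ioi hzero, integral_zero, add_zero,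
    intervalIntegral.integral_of_le h0R]

lemma cont_integrand {f : ℝ × ℝ → ℝ × ℝ} (hf : Continuous f) (c x d : ℝ × ℝ) :
    Continuous fun t : ℝ => dot c (f (x + t • d)) := by
  unfold dot
  fun_prop
section Chunk3
open Set Metric intervalIntegral

def phiW (w f : ℝ × ℝ → ℝ × ℝ) (x : ℝ × ℝ) : ℝ :=
  ∫ t in Set.Ioi (0 : ℝ), dot (w x) (f (x + t • w x))

lemma f_vanish {f : ℝ × ℝ → ℝ × ℝ} (hsupp : tsupport f ⊆ disc) {a : ℝ × ℝ}
    (ha : dot a a = 1) (x : ℝ × ℝ) {t : ℝ} (ht : Rbd x ≤ t) : f (x + t • a) = 0 :=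
  image_eq_zero_of_notMem_tsupport (fun h => far_out ha x ht (hsupp h))

lemma dot_zero' (a : ℝ × ℝ) : dot a 0 = 0 := by simp [dot]

lemma phiW_rep {w f : ℝ × ℝ → ℝ × ℝ} (hf : Continuous f)
    (hunit : ∀ x, dot (w x) (w x) = 1) (hsupp : tsupport f ⊆ disc)
    (x : ℝ × ℝ) {R : ℝ} (hR : Rbd x ≤ R) :
    phiW w f x = ∫ t in (0:ℝ)..R, dot (w x) (f (x + t • w x)) :=
  integral_Ioi_eq_intervalIntegral (cont_integrand hf _ _ _) (Rbd_pos x).le hR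
    (fun t ht => by rw [f_vanish hsupp (hunit x) x ht, dot_zero'])

lemma jointG_contDiff {w f : ℝ × ℝ → ℝ × ℝ} (hw : ContDiff ℝ 1 w) (hf : ContDiff ℝ 1 f) :
    ContDiff ℝ 1 (fun p : (ℝ × ℝ) × ℝ => dot (w p.1) (f (p.1 + p.2 • w p.1))) := by
  have A : ContDiff ℝ 1 (fun p : (ℝ × ℝ) × ℝ => w p.1) := hw.comp contDiff_fst
  have Pt : ContDiff ℝ 1 (fun p : (ℝ × ℝ) × ℝ => p.1 + p.2 • w p.1) :=
    contDiff_fst.add (contDiff_snd.smul A)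
  have B : ContDiff ℝ 1 (fun p : (ℝ × ℝ) × ℝ => f (p.1 + p.2 • w p.1)) := hf.comp Pt
  exact (A.fst.mul B.fst).add (A.snd.mul B.snd)

lemma phiW_hasFDerivAt {w f : ℝ × ℝ → ℝ × ℝ} (hw : ContDiff ℝ 1 w) (hf : ContDiff ℝ 1 f)
    (hunit : ∀ x, dot (w x) (w x) = 1) (hsupp : tsupport f ⊆ disc) (x₀ : ℝ × ℝ) :
    ∃ D : (ℝ × ℝ) →L[ℝ] ℝ, HasFDerivAt (phiW w f) D x₀ := by
  classical
  set R : ℝ := 5 + 2 * (|x₀.1| + |x₀.2|) with hRdef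
  have hR0 : (0:ℝ) ≤ R := by
    have := abs_nonneg x₀.1; have := abs_nonneg x₀.2; rw [hRdef]; linarith
  set F : (ℝ × ℝ) → ℝ → ℝ := fun x t => dot (w x) (f (x + t • w x)) with hFdef
  -- the ball on which everything is uniform
  have hRbd : ∀ x ∈ Metric.ball x₀ 1, Rbd x ≤ R := by
    intro x hx
    rw [Metric.mem_ball, dist_eq_norm] at hx
    have h1 : |x.1 - x₀.1| ≤ ‖x - x₀‖ := by
      simpa using norm_fst_le (x - x₀)
    have h2 : |x.2 - x₀.2| ≤ ‖x - x₀‖ := by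
      simpa using norm_snd_le (x - x₀)
    have a1 : |x.1| ≤ |x₀.1| + 1 := by
      have := abs_sub_abs_le_abs_sub x.1 x₀.1; linarith
    have a2 : |x.2| ≤ |x₀.2| + 1 := by
      have := abs_sub_abs_le_abs_sub x.2 x₀.2; linarith
    unfold Rbd; rw [hRdef]; linarith
  have heq : Set.EqOn (phiW w f) (fun x => ∫ t in (0:ℝ)..R, F x t) (Metric.ball x₀ 1) :=
    fun x hx => phiW_rep hf.continuous hunit hsupp x (hRbd x hx)
  -- joint C¹ function
  have hG : ContDiff ℝ 1 (fun p : (ℝ × ℝ) × ℝ => F p.1 p.2) := jointG_contDiff hw hf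
  set J : (ℝ × ℝ) →L[ℝ] (ℝ × ℝ) × ℝ :=
    (ContinuousLinearMap.id ℝ (ℝ × ℝ)).prod (0 : (ℝ × ℝ) →L[ℝ] ℝ) with hJdef
  set F' : (ℝ × ℝ) → ℝ → ((ℝ × ℝ) →L[ℝ] ℝ) :=
    fun x t => (fderiv ℝ (fun p : (ℝ × ℝ) × ℝ => F p.1 p.2) (x, t)).comp J with hF'def
  have hdiffG : Differentiable ℝ (fun p : (ℝ × ℝ) × ℝ => F p.1 p.2) :=
    hG.differentiable one_ne_zero
  have hdiffF : ∀ (t : ℝ) (x : ℝ × ℝ), HasFDerivAt (fun y => F y t) (F' x t) x := by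
    intro t x
    have hline : HasFDerivAt (fun y : ℝ × ℝ => (y, t)) J x :=
      HasFDerivAt.prodMk (hasFDerivAt_id x) (hasFDerivAt_const t x)
    exact ((hdiffG (x, t)).hasFDerivAt).comp x hline
  have hF'cont : Continuous fun p : (ℝ × ℝ) × ℝ => F' p.1 p.2 := by
    have h1 : Continuous (fderiv ℝ (fun p : (ℝ × ℝ) × ℝ => F p.1 p.2)) :=
      hG.continuous_fderiv one_ne_zero
    exact h1.clm_comp (continuous_const : Continuous fun _ : (ℝ × ℝ) × ℝ => J)
  obtain ⟨C, hC⟩ :=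
    ((isCompact_closedBall x₀ 1).prod isCompact_Icc).exists_bound_of_continuousOn
      (hF'cont.continuousOn : ContinuousOn _ (Metric.closedBall x₀ 1 ×ˢ Set.Icc (0:ℝ) R))
  have key := intervalIntegral.hasFDerivAt_integral_of_dominated_of_fderiv_le
    (F := F) (F' := F') (x₀ := x₀) (a := 0) (b := R) (bound := fun _ => C)
    (μ := volume) (Metric.ball_mem_nhds x₀ zero_lt_one)
    (Filter.Eventually.of_forall fun x =>
      ((cont_integrand hf.continuous (w x) x (w x)).aestronglyMeasurable : _))
    ((cont_integrand hf.continuous (w x₀) x₀ (w x₀)).intervalIntegrable 0 R)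
    ((hF'cont.comp (Continuous.prodMk continuous_const continuous_id)).aestronglyMeasurable : _)
    (Filter.Eventually.of_forall fun t ht x hx => by
      have hmem : (x, t) ∈ Metric.closedBall x₀ 1 ×ˢ Set.Icc (0:ℝ) R := by
        constructor
        · exact Metric.ball_subset_closedBall hx
        · rw [Set.uIoc_of_le hR0] at ht
          exact ⟨ht.1.le, ht.2⟩
      exact hC (x, t) hmem)
    (intervalIntegrable_const)
    (Filter.Eventually.of_forall fun t ht x hx => hdiffF t x)
  exact ⟨_, key.congr_of_eventuallyEq
    (Filter.eventuallyEq_of_mem (Metric.ball_mem_nhds x₀ zero_lt_one) heq)⟩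

end Chunk3
section Chunk4
open Set Metric intervalIntegral

lemma phiW_dir {w f : ℝ × ℝ → ℝ × ℝ}
    (hline : ∀ (x : ℝ × ℝ) (t : ℝ), 0 ≤ t → w (x + t • w x) = w x)
    (hunit : ∀ x, dot (w x) (w x) = 1) (hf : ContDiff ℝ 1 f)
    (hsupp : tsupport f ⊆ disc) (x₀ : ℝ × ℝ) {D : (ℝ × ℝ) →L[ℝ] ℝ}
    (hD : HasFDerivAt (phiW w f) D x₀) :
    D (w x₀) = - dot (w x₀) (f x₀) := by
  set a : ℝ × ℝ := w x₀ with ha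
  set g₀ : ℝ → ℝ := fun t => dot a (f (x₀ + t • a)) with hg₀def
  have hg₀cont : Continuous g₀ := cont_integrand hf.continuous a x₀ a
  set R : ℝ := Rbd x₀ + 4 with hRdef
  have hRb : Rbd x₀ ≤ R := by rw [hRdef]; linarith
  have hg₀van : ∀ t, Rbd x₀ ≤ t → g₀ t = 0 := fun t ht => by
    show dot a (f (x₀ + t • a)) = 0
    rw [ha, f_vanish hsupp (hunit x₀) x₀ ht, dot_zero']
  set c : ℝ → ℝ × ℝ := fun s => x₀ + s • a with hcdef
  -- Step 1 : representation of phiW along the ray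
  have step1 : ∀ s ∈ Set.Icc (0:ℝ) 1, phiW w f (c s) = ∫ t in s..(R+1), g₀ t := by
    intro s hs
    have hws : w (c s) = a := hline x₀ s hs.1
    have harith : ∀ t : ℝ, c s + t • a = x₀ + (t + s) • a := by
      intro t; rw [hcdef]; simp only [add_smul]; abel
    have e1 : phiW w f (c s) = ∫ t in Set.Ioi (0:ℝ), g₀ (t + s) := by
      unfold phiW
      rw [hws]
      congr 1
      ext t
      rw [harith t]
    have e2 : (∫ t in Set.Ioi (0:ℝ), g₀ (t + s)) = ∫ t in (0:ℝ)..R, g₀ (t + s) := by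
      refine integral_Ioi_eq_intervalIntegral
        (hg₀cont.comp (continuous_id.add continuous_const)) (Rbd_pos x₀).le hRb ?_
      intro t ht
      exact hg₀van (t + s) (by linarith [hs.1])
    have e3 : (∫ t in (0:ℝ)..R, g₀ (t + s)) = ∫ t in s..(R+s), g₀ t := by
      rw [intervalIntegral.integral_comp_add_right g₀ s, zero_add]
    have e4 : (∫ t in (R+s)..(R+1), g₀ t) = 0 := by
      rw [intervalIntegral.integral_congr (g := fun _ => (0:ℝ))
        (fun t ht => ?_), intervalIntegral.integral_const, smul_zero]
      have hmin : R + s ≤ R + 1 := by linarith [hs.2]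
      rw [Set.uIcc_of_le hmin] at ht
      exact hg₀van t (by linarith [ht.1, hs.1])
    have e5 : (∫ t in s..(R+s), g₀ t) + (∫ t in (R+s)..(R+1), g₀ t) = ∫ t in s..(R+1), g₀ t :=
      intervalIntegral.integral_add_adjacent_intervals
        (hg₀cont.intervalIntegrable _ _) (hg₀cont.intervalIntegrable _ _)
    rw [e1, e2, e3, ← e5, e4, add_zero]
  -- Step 2 : FTC at the left endpoint
  have step2 : HasDerivAt (fun s => ∫ t in s..(R+1), g₀ t) (-(g₀ 0)) 0 :=
    intervalIntegral.integral_hasDerivAt_left (hg₀cont.intervalIntegrable _ _)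
      (hg₀cont.stronglyMeasurable.stronglyMeasurableAtFilter)
      hg₀cont.continuousAt
  -- Step 3 : derivative of the composite along the ray
  have hc : HasDerivAt c a 0 := by
    have h1 : HasDerivAt (fun s : ℝ => s • a) ((1:ℝ) • a) 0 :=
      (hasDerivAt_id (0:ℝ)).smul_const a
    rw [one_smul] at h1
    exact h1.const_add x₀
  have hc0 : c 0 = x₀ := by simp [hcdef]
  have hφc : HasDerivAt (fun s => phiW w f (c s)) (D a) 0 := by
    have hD' : HasFDerivAt (phiW w f) D (c 0) := by rwa [hc0]
    exact hD'.comp_hasDerivAt 0 hc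
  -- Step 4 : one-sided uniqueness
  have hmem : Set.Icc (0:ℝ) 1 ∈ nhdsWithin (0:ℝ) (Set.Ici 0) :=
    Icc_mem_nhdsGE_of_mem ⟨le_rfl, zero_lt_one⟩
  have hcongr : HasDerivWithinAt (fun s => phiW w f (c s)) (-(g₀ 0)) (Set.Ici 0) 0 :=
    (step2.hasDerivWithinAt).congr_of_eventuallyEq
      (Filter.eventuallyEq_of_mem hmem (fun s hs => step1 s hs))
      (step1 0 ⟨le_rfl, zero_le_one⟩)
  have huniq := (uniqueDiffOn_Ici (0:ℝ) 0 (Set.mem_Ici.mpr le_rfl)).eq_deriv _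
    hφc.hasDerivWithinAt hcongr
  rw [huniq, hg₀def]
  simp
end Chunk4
section Chunk5
open Set Metric intervalIntegral

def dotCLM : (ℝ × ℝ) →L[ℝ] ((ℝ × ℝ) →L[ℝ] ℝ) :=
  (ContinuousLinearMap.fst ℝ ℝ ℝ).smulRight (ContinuousLinearMap.fst ℝ ℝ ℝ)
  + (ContinuousLinearMap.snd ℝ ℝ ℝ).smulRight (ContinuousLinearMap.snd ℝ ℝ ℝ)

lemma dotCLM_apply (a b : ℝ × ℝ) : dotCLM a b = dot a b := by
  simp [dotCLM, dot, ContinuousLinearMap.smulRight_apply, smul_eq_mul]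

lemma fderiv_apply_eq_dot_grad (φ : ℝ × ℝ → ℝ) (y b : ℝ × ℝ) :
    fderiv ℝ φ y b = dot b (grad φ y) := by
  have hb : b = b.1 • ((1:ℝ),(0:ℝ)) + b.2 • ((0:ℝ),(1:ℝ)) := by
    ext <;> simp
  conv_lhs => rw [hb]
  rw [map_add, _root_.map_smul, _root_.map_smul]
  simp only [grad, dot, smul_eq_mul]

lemma clm_ext_of_pair {a b : ℝ × ℝ} (hind : LinearIndependent ℝ ![a, b])
    {L M : (ℝ × ℝ) →L[ℝ] ℝ} (ha : L a = M a) (hb : L b = M b) : L = M := by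
  have hcard : Fintype.card (Fin 2) = Module.finrank ℝ (ℝ × ℝ) := by
    simp
  let B := basisOfLinearIndependentOfCardEqFinrank hind hcard
  have hB : ⇑B = ![a, b] := coe_basisOfLinearIndependentOfCardEqFinrank hind hcard
  have : (L : (ℝ × ℝ) →ₗ[ℝ] ℝ) = (M : (ℝ × ℝ) →ₗ[ℝ] ℝ) := by
    apply B.ext
    intro i
    fin_cases i <;> simp [hB, ha, hb]
  exact ContinuousLinearMap.coe_injective this

lemma grad_continuous {φ : ℝ × ℝ → ℝ} (hφ : ContDiff ℝ 1 φ) : Continuous (grad φ) := by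
  have h := hφ.continuous_fderiv one_ne_zero
  exact (h.clm_apply continuous_const).prodMk (h.clm_apply continuous_const)

lemma grad_vanish {φ : ℝ × ℝ → ℝ} {y : ℝ × ℝ} (hy : y ∉ tsupport φ) : grad φ y = 0 := by
  have hev : φ =ᶠ[nhds y] (fun _ => (0:ℝ)) :=
    Filter.eventuallyEq_of_mem ((isClosed_tsupport φ).isOpen_compl.mem_nhds hy)
      (fun z hz => image_eq_zero_of_notMem_tsupport hz)
  have : fderiv ℝ φ y = fderiv ℝ (fun _ => (0:ℝ)) y := hev.fderiv_eq
  rw [grad, this, fderiv_fun_const]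
  simp

lemma ray_integral_grad {w : ℝ × ℝ → ℝ × ℝ}
    (hunit : ∀ x, dot (w x) (w x) = 1) {φ : ℝ × ℝ → ℝ}
    (hφ : ContDiff ℝ 1 φ) (hsuppφ : tsupport φ ⊆ disc) (x : ℝ × ℝ) :
    ∫ t in Set.Ioi (0:ℝ), dot (w x) (grad φ (x + t • w x)) = - φ x := by
  set a : ℝ × ℝ := w x with hadef
  have hcont : Continuous fun t : ℝ => dot a (grad φ (x + t • a)) :=
    cont_integrand (grad_continuous hφ) a x a
  have hvan : ∀ t, Rbd x ≤ t → dot a (grad φ (x + t • a)) = 0 := by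
    intro t ht
    have hnot : (x + t • a) ∉ tsupport φ := fun h => far_out (hunit x) x ht (hsuppφ h)
    rw [grad_vanish hnot, dot_zero']
  rw [integral_Ioi_eq_intervalIntegral hcont (Rbd_pos x).le le_rfl hvan]
  have hder : ∀ t ∈ Set.uIcc (0:ℝ) (Rbd x),
      HasDerivAt (fun s => φ (x + s • a)) (dot a (grad φ (x + t • a))) t := by
    intro t _
    have hc : HasDerivAt (fun s : ℝ => x + s • a) a t := by
      have h1 : HasDerivAt (fun s : ℝ => s • a) ((1:ℝ) • a) t :=
        (hasDerivAt_id t).smul_const a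
      rw [one_smul] at h1
      exact h1.const_add x
    have h2 := ((hφ.differentiable one_ne_zero (x + t • a)).hasFDerivAt).comp_hasDerivAt t hc
    rwa [fderiv_apply_eq_dot_grad] at h2
  rw [intervalIntegral.integral_eq_sub_of_hasDerivAt hder (hcont.intervalIntegrable _ _)]
  have h0 : φ (x + Rbd x • a) = 0 :=
    image_eq_zero_of_notMem_tsupport (fun h => far_out (hunit x) x le_rfl (hsuppφ h))
  rw [h0]
  simp

end Chunk5
section Chunk6
open Set Metric

lemma isPreconnected_S {c : ℝ} (hc : 0 ≤ c) :
    IsPreconnected {p : ℝ × ℝ | c < p.1 ^ 2 + p.2 ^ 2} := by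
  set g : ℝ × ℝ → ℝ × ℝ := fun q =>
    ((Real.sqrt c + Real.exp q.1) * Real.cos q.2,
     (Real.sqrt c + Real.exp q.1) * Real.sin q.2) with hgdef
  have hgc : Continuous g := by
    apply Continuous.prodMk <;> fun_prop
  have hrange : Set.range g = {p : ℝ × ℝ | c < p.1 ^ 2 + p.2 ^ 2} := by
    ext p
    constructor
    · rintro ⟨q, rfl⟩
      simp only [hgdef, Set.mem_setOf_eq]
      have h1 : ((Real.sqrt c + Real.exp q.1) * Real.cos q.2) ^ 2 +
          ((Real.sqrt c + Real.exp q.1) * Real.sin q.2) ^ 2 =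
          (Real.sqrt c + Real.exp q.1) ^ 2 * (Real.sin q.2 ^ 2 + Real.cos q.2 ^ 2) := by
        ring
      rw [h1, Real.sin_sq_add_cos_sq, mul_one]
      nlinarith [Real.exp_pos q.1, Real.sq_sqrt hc, Real.sqrt_nonneg c]
    · intro hp
      simp only [Set.mem_setOf_eq] at hp
      set m : ℝ := Real.sqrt (p.1 ^ 2 + p.2 ^ 2) with hmdef
      have hm : Real.sqrt c < m := Real.sqrt_lt_sqrt hc hp
      have hm0 : 0 < m := lt_of_le_of_lt (Real.sqrt_nonneg c) hm
      have hmsq : m ^ 2 = p.1 ^ 2 + p.2 ^ 2 := Real.sq_sqrt (by positivity)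
      set z : ℂ := ⟨p.1, p.2⟩ with hzdef
      have hzabs : ‖z‖ = m := by
        rw [Complex.norm_def, Complex.normSq_mk, hmdef]
        congr 1
        ring
      have hzne : z ≠ 0 := by
        intro h
        rw [h] at hzabs
        simp at hzabs
        exact (ne_of_gt hm0) hzabs.symm
      have hcos : Real.cos (Complex.arg z) = p.1 / m := by
        rw [← hzabs]; simpa using Complex.cos_arg hzne
      have hsin : Real.sin (Complex.arg z) = p.2 / m := by
        rw [← hzabs]; simpa using Complex.sin_arg z
      refine ⟨(Real.log (m - Real.sqrt c), Complex.arg z), ?_⟩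
      have hexp : Real.exp (Real.log (m - Real.sqrt c)) = m - Real.sqrt c :=
        Real.exp_log (by linarith)
      simp only [hgdef, hexp, hcos, hsin]
      have : Real.sqrt c + (m - Real.sqrt c) = m := by ring
      rw [this]
      ext <;> simp <;> field_simp
  rw [← hrange]
  exact isPreconnected_range hgc

lemma const_on_ball {φ : ℝ × ℝ → ℝ} (hφ : Differentiable ℝ φ) {p z : ℝ × ℝ} {r : ℝ}
    (hz : z ∈ Metric.ball p r) (hfd : ∀ q ∈ Metric.ball p r, fderiv ℝ φ q = 0) :
    φ z = φ p := by
  have hr : 0 < r := lt_of_le_of_lt dist_nonneg (Metric.mem_ball.mp hz)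
  exact (convex_ball p r).is_const_of_fderivWithin_eq_zero hφ.differentiableOn
    (fun q hq => by rw [fderivWithin_of_isOpen Metric.isOpen_ball hq]; exact hfd q hq)
    hz (Metric.mem_ball_self hr)

lemma zero_on_S {φ : ℝ × ℝ → ℝ} (hφdiff : Differentiable ℝ φ) (hφcont : Continuous φ)
    {S : Set (ℝ × ℝ)} (hSopen : IsOpen S) (hSconn : IsPreconnected S)
    (hfd : ∀ p ∈ S, fderiv ℝ φ p = 0) {y₀ : ℝ × ℝ} (hy₀ : y₀ ∈ S) (hφy₀ : φ y₀ = 0) :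
    ∀ p ∈ S, φ p = 0 := by
  set U : Set (ℝ × ℝ) := interior {p | φ p = 0} with hUdef
  set V : Set (ℝ × ℝ) := {p | φ p ≠ 0} with hVdef
  have hUopen : IsOpen U := isOpen_interior
  have hVopen : IsOpen V := by
    have : V = φ ⁻¹' ({0}ᶜ) := rfl
    rw [this]
    exact (isOpen_compl_singleton).preimage hφcont
  have hloc : ∀ p ∈ S, φ p = 0 → p ∈ U := by
    intro p hp hp0
    obtain ⟨r, hr0, hrsub⟩ := Metric.isOpen_iff.mp hSopen p hp
    apply mem_interior.mpr ⟨Metric.ball p r, ?_, Metric.isOpen_ball, Metric.mem_ball_self hr0⟩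
    intro z hzball
    have : φ z = φ p := const_on_ball hφdiff hzball (fun q hq => hfd q (hrsub hq))
    simp [Set.mem_setOf_eq, this, hp0]
  intro p hp
  by_contra hpne
  have hsub : S ⊆ U ∪ V := by
    intro q hq
    by_cases h : φ q = 0
    · exact Or.inl (hloc q hq h)
    · exact Or.inr h
  obtain ⟨z, hzS, hzU, hzV⟩ := hSconn U V hUopen hVopen hsub
    ⟨y₀, hy₀, hloc y₀ hy₀ hφy₀⟩ ⟨p, hp, hpne⟩
  have hz0 : z ∈ {p : ℝ × ℝ | φ p = 0} := interior_subset hzU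
  exact hzV hz0

end Chunk6
theorem stmt5
    (u v : ℝ × ℝ → ℝ × ℝ) (hu : ContDiff ℝ 1 u) (hv : ContDiff ℝ 1 v)
    (hunitu : ∀ x, dot (u x) (u x) = 1) (hunitv : ∀ x, dot (v x) (v x) = 1)
    (hlineu : ∀ (x : ℝ × ℝ) (t : ℝ), 0 ≤ t → u (x + t • u x) = u x)
    (hlinev : ∀ (x : ℝ × ℝ) (t : ℝ), 0 ≤ t → v (x + t • v x) = v x)
    (hind : ∀ x, LinearIndependent ℝ ![u x, v x])
    (f : ℝ × ℝ → ℝ × ℝ) (hf : ContDiff ℝ 2 f)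
    (hcs : HasCompactSupport f) (hsupp : tsupport f ⊆ disc) :
    (∀ x, L1 u v f x = 0) ↔
      ∃ φ : ℝ × ℝ → ℝ, ContDiff ℝ 3 φ ∧ tsupport φ ⊆ disc ∧ ∀ x, f x = grad φ x := by
  have hf1 : ContDiff ℝ 1 f := hf.of_le one_le_two
  constructor
  · -- hard direction
    intro hL1
    have hφeq : ∀ x, phiW u f x = phiW v f x := by
      intro x
      have h : - phiW u f x + phiW v f x = 0 := hL1 x
      linarith
    have hD : ∀ x, HasFDerivAt (phiW u f) (-(dotCLM (f x))) x := by
      intro x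
      obtain ⟨D, hDx⟩ := phiW_hasFDerivAt hu hf1 hunitu hsupp x
      have hDu : D (u x) = - dot (u x) (f x) := phiW_dir hlineu hunitu hf1 hsupp x hDx
      have hDv : D (v x) = - dot (v x) (f x) := by
        have hfun : phiW u f = phiW v f := funext hφeq
        have hDx' : HasFDerivAt (phiW v f) D x := hfun ▸ hDx
        exact phiW_dir hlinev hunitv hf1 hsupp x hDx'
      have hM : D = -(dotCLM (f x)) := by
        apply clm_ext_of_pair (hind x)
        · rw [hDu, ContinuousLinearMap.neg_apply, dotCLM_apply, dot_comm]
        · rw [hDv, ContinuousLinearMap.neg_apply, dotCLM_apply, dot_comm]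
      rwa [hM] at hDx
    set φ : ℝ × ℝ → ℝ := fun y => - phiW u f y with hφdef
    have hD' : ∀ x, HasFDerivAt φ (dotCLM (f x)) x := by
      intro x
      have := (hD x).neg
      rw [neg_neg] at this
      exact this
    have hdiff : Differentiable ℝ φ := fun x => (hD' x).differentiableAt
    have hfderiv' : fderiv ℝ φ = fun y => dotCLM (f y) := funext fun y => (hD' y).fderiv
    have hgradeq : ∀ x, f x = grad φ x := by
      intro x
      have h10 : fderiv ℝ φ x = dotCLM (f x) := (hD' x).fderiv
      unfold grad
      rw [h10]
      apply Prod.ext <;> simp [dotCLM_apply, dot]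
    have hC3 : ContDiff ℝ 3 φ := by
      have h3 : (3 : WithTop ℕ∞) = 2 + 1 := by norm_num
      rw [h3, contDiff_succ_iff_fderiv]
      refine ⟨hdiff, ?_, ?_⟩
      · intro h
        simp at h
      · rw [hfderiv']
        exact dotCLM.contDiff.comp hf
    refine ⟨φ, hC3, ?_, hgradeq⟩
    -- support of φ
    by_cases hne : (tsupport f).Nonempty
    · obtain ⟨p₀, hp₀mem, hmax'⟩ := IsCompact.exists_isMaxOn hcs hne
        ((continuous_fst.pow 2 |>.add (continuous_snd.pow 2)).continuousOn)
      have hmax : ∀ p ∈ tsupport f, p.1 ^ 2 + p.2 ^ 2 ≤ p₀.1 ^ 2 + p₀.2 ^ 2 :=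
        fun p hp => hmax' hp
      set c : ℝ := p₀.1 ^ 2 + p₀.2 ^ 2 with hcdef
      have hc0 : 0 ≤ c := by positivity
      have hc1 : c < 1 := hsupp hp₀mem
      set S : Set (ℝ × ℝ) := {p : ℝ × ℝ | c < p.1 ^ 2 + p.2 ^ 2} with hSdef
      have hSopen : IsOpen S :=
        isOpen_lt continuous_const ((continuous_fst.pow 2).add (continuous_snd.pow 2))
      have hSconn : IsPreconnected S := isPreconnected_S hc0
      have hfS : ∀ p ∈ S, f p = 0 := by
        intro p hp
        apply image_eq_zero_of_notMem_tsupport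
        intro hmem
        exact absurd (hmax p hmem) (not_le.mpr hp)
      have hfd0 : ∀ p ∈ S, fderiv ℝ φ p = 0 := by
        intro p hp
        rw [hfderiv']
        show dotCLM (f p) = 0
        rw [hfS p hp]
        exact map_zero dotCLM
      set y₀ : ℝ × ℝ := ((0:ℝ), (0:ℝ)) + (1:ℝ) • u ((0:ℝ), (0:ℝ)) with hy₀def
      have hy₀S : y₀ ∈ S := by
        have h1 := hunitu ((0:ℝ), (0:ℝ))
        simp only [dot] at h1
        have hy₀eq : y₀ = u ((0:ℝ), (0:ℝ)) := by
          rw [hy₀def, one_smul]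
          apply Prod.ext <;> simp
        rw [hSdef, Set.mem_setOf_eq, hy₀eq]
        nlinarith
      have hRbd00 : Rbd ((0:ℝ), (0:ℝ)) = 1 := by
        unfold Rbd; norm_num
      have hφy₀ : φ y₀ = 0 := by
        have huy₀ : u y₀ = u ((0:ℝ), (0:ℝ)) := hlineu ((0:ℝ), (0:ℝ)) 1 zero_le_one
        have hzero : ∀ t ∈ Set.Ioi (0:ℝ), dot (u y₀) (f (y₀ + t • u y₀)) = 0 := by
          intro t ht
          have ht' : 0 < t := ht
          have harith : y₀ + t • u y₀ = ((0:ℝ),(0:ℝ)) + (1 + t) • u ((0:ℝ),(0:ℝ)) := by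
            rw [huy₀, hy₀def, add_smul, one_smul]
            abel
          rw [harith, f_vanish hsupp (hunitu ((0:ℝ),(0:ℝ))) ((0:ℝ),(0:ℝ))
            (by rw [hRbd00]; linarith), dot_zero']
        have : phiW u f y₀ = 0 := by
          unfold phiW
          rw [setIntegral_congr_fun measurableSet_Ioi hzero, integral_zero]
        rw [hφdef]
        simp [this]
      have hzeroS : ∀ p ∈ S, φ p = 0 :=
        zero_on_S hdiff hC3.continuous hSopen hSconn hfd0 hy₀S hφy₀
      have hsub : Function.support φ ⊆ {p : ℝ × ℝ | p.1 ^ 2 + p.2 ^ 2 ≤ c} := by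
        intro p hp
        by_contra h
        simp only [Set.mem_setOf_eq, not_le] at h
        exact hp (hzeroS p h)
      have hclosed : IsClosed {p : ℝ × ℝ | p.1 ^ 2 + p.2 ^ 2 ≤ c} :=
        isClosed_le ((continuous_fst.pow 2).add (continuous_snd.pow 2)) continuous_const
      refine (closure_minimal hsub hclosed).trans ?_
      intro p hp
      simp only [Set.mem_setOf_eq] at hp ⊢
      exact lt_of_le_of_lt hp hc1
    · rw [Set.not_nonempty_iff_eq_empty] at hne
      have hf0 : ∀ p, f p = 0 := fun p =>
        image_eq_zero_of_notMem_tsupport (by rw [hne]; exact Set.notMem_empty p)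
      have hφ0 : φ = fun _ => (0:ℝ) := by
        funext y
        rw [hφdef]
        unfold phiW
        simp [hf0, dot_zero']
      rw [hφ0]
      have : tsupport (fun _ : ℝ × ℝ => (0:ℝ)) = ∅ := by
        simp [tsupport, Function.support]
      rw [this]
      exact Set.empty_subset _
  · -- easy direction
    rintro ⟨φ, hφ3, hφsupp, hgrad⟩ x
    have hφ1 : ContDiff ℝ 1 φ := hφ3.of_le (by norm_num)
    have h1 : ∫ t in Set.Ioi (0:ℝ), dot (u x) (f (x + t • u x)) = - φ x := by
      simp only [hgrad]
      exact ray_integral_grad hunitu hφ1 hφsupp x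
    have h2 : ∫ t in Set.Ioi (0:ℝ), dot (v x) (f (x + t • v x)) = - φ x := by
      simp only [hgrad]
      exact ray_integral_grad hunitv hφ1 hφsupp x
    show (- ∫ t in Set.Ioi (0:ℝ), dot (u x) (f (x + t • u x))) +
      ∫ t in Set.Ioi (0:ℝ), dot (v x) (f (x + t • v x)) = 0
    rw [h1, h2]
    ring
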